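/- Boundary values of the refinement: A_{k+1}(1) = A_{k+1}(2k+1) equals the number of pairs (ρ, r) where ρ is a perfect matching of {0,...,2k+1} containing {0,1} and r is a root-connected orientation of G(ρ) with root {0,1}; by the merging property, this equals A_k evaluated on the singleton-root configuration, i.e., the number of pairs (σ, s) with σ a partition of {0,...,2k} having {0} as a block and all other blocks of size 2, and s a root-connected orientation with root {0}. -/
import Mathlib


/-- Two blocks `B`, `B'` form a crossing: there are `i, k ∈ B` and `j, l ∈ B'`
with `i < j < k < l` or `i > j > k > l`. -/
def Crosses (B B' : Finset ℕ) : Prop :=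
  ∃ i ∈ B, ∃ k ∈ B, ∃ j ∈ B', ∃ l ∈ B',
    (i < j ∧ j < k ∧ k < l) ∨ (i > j ∧ j > k ∧ k > l)

/-- `ρ` is a set partition of `{0, ..., n-1}`. -/
def IsPartitionOf (n : ℕ) (ρ : Finset (Finset ℕ)) : Prop :=
  (∀ B ∈ ρ, B.Nonempty) ∧
  (∀ B ∈ ρ, ∀ B' ∈ ρ, B ≠ B' → Disjoint B B') ∧
  ρ.sup id = Finset.range n

/-- `r` is an orientation of the crossing graph `G(ρ)`: it relates exactly the
pairs of distinct crossing blocks of `ρ`, choosing one direction for each edge. -/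
def IsOrientation (ρ : Finset (Finset ℕ)) (r : Finset ℕ → Finset ℕ → Prop) : Prop :=
  (∀ B B', r B B' → B ∈ ρ ∧ B' ∈ ρ ∧ B ≠ B' ∧ Crosses B B') ∧
  (∀ B ∈ ρ, ∀ B' ∈ ρ, B ≠ B' → Crosses B B' → (r B B' ↔ ¬ r B' B))

/-- An orientation is acyclic if it has no directed cycle. -/
def AcyclicRel (r : Finset ℕ → Finset ℕ → Prop) : Prop :=
  ∀ B, ¬ Relation.TransGen r B B

/-- `r` is a root-connected orientation of `G(ρ)` with root `S`: it is an acyclic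
orientation and `S` is its unique source. -/
def RootConnected (ρ : Finset (Finset ℕ)) (r : Finset ℕ → Finset ℕ → Prop)
    (S : Finset ℕ) : Prop :=
  IsOrientation ρ r ∧ AcyclicRel r ∧ S ∈ ρ ∧ (∀ B', ¬ r B' S) ∧
    (∀ B ∈ ρ, (∀ B', ¬ r B' B) → B = S)

/-- `ρ ∈ M_S(n)`: a partition of `{0,...,n-1}` with `S` as a block and all
other blocks of size 2. -/
def MSPartition (n : ℕ) (S : Finset ℕ) (ρ : Finset (Finset ℕ)) : Prop :=
  IsPartitionOf n ρ ∧ S ∈ ρ ∧ ∀ B ∈ ρ, B ≠ S → B.card = 2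

/-- The number of pairs `(ρ, r)` with `ρ ∈ M_S(n)` and `r` a root-connected
orientation of `G(ρ)` with root `S`.  (This is `A_{k+1}(S)` when `n = |S| + 2k`.) -/
noncomputable def countA (n : ℕ) (S : Finset ℕ) : ℕ :=
  Nat.card {p : Finset (Finset ℕ) × (Finset ℕ → Finset ℕ → Prop) //
    MSPartition n S p.1 ∧ RootConnected p.1 p.2 S}

/-! ### Auxiliary development -/

lemma crosses_symm {B B' : Finset ℕ} (h : Crosses B B') : Crosses B' B := by
  obtain ⟨i, hi, k, hk, j, hj, l, hl, h | h⟩ := h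
  · exact ⟨l, hl, j, hj, k, hk, i, hi, Or.inr ⟨by omega, by omega, by omega⟩⟩
  · exact ⟨l, hl, j, hj, k, hk, i, hi, Or.inl ⟨by omega, by omega, by omega⟩⟩

/-- Data witnessing a relabeling of the ground set `range n \ S` onto
`range n' \ S'`, where the roots `S`, `S'` cross nothing. -/
structure ShiftData (n n' : ℕ) (S S' : Finset ℕ) (g g' : ℕ → ℕ) : Prop where
  hSne : S.Nonempty
  hS'sub : S' ⊆ Finset.range n'
  hS'ne : S'.Nonempty
  hmem : ∀ x, x ∈ Finset.range n → x ∉ S → g x ∈ Finset.range n' ∧ g x ∉ S'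
  hmem' : ∀ y, y ∈ Finset.range n' → y ∉ S' → g' y ∈ Finset.range n ∧ g' y ∉ S
  hinv : ∀ x, x ∈ Finset.range n → x ∉ S → g' (g x) = x
  hinv' : ∀ y, y ∈ Finset.range n' → y ∉ S' → g (g' y) = y
  hmono : ∀ x y, x ∈ Finset.range n → x ∉ S → y ∈ Finset.range n → y ∉ S →
    (x < y ↔ g x < g y)
  hcrossS : ∀ B, B ⊆ Finset.range n → ¬ Crosses S B
  hcrossS' : ∀ B, B ⊆ Finset.range n' → ¬ Crosses S' B
  hSsub : S ⊆ Finset.range n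

lemma ShiftData.symm {n n' : ℕ} {S S' : Finset ℕ} {g g' : ℕ → ℕ}
    (h : ShiftData n n' S S' g g') : ShiftData n' n S' S g' g := by
  refine ⟨h.hS'ne, h.hSsub, h.hSne, h.hmem', h.hmem, h.hinv', h.hinv, ?_,
    h.hcrossS', h.hcrossS, h.hS'sub⟩
  intro x y hx hxS hy hyS
  have h1 := h.hmem' x hx hxS
  have h2 := h.hmem' y hy hyS
  rw [h.hmono _ _ h1.1 h1.2 h2.1 h2.2, h.hinv' x hx hxS, h.hinv' y hy hyS]

/-- The block-level map. -/
def bmap (S S' : Finset ℕ) (g : ℕ → ℕ) (B : Finset ℕ) : Finset ℕ :=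
  if B = S then S' else B.image g

def pmap (S S' : Finset ℕ) (g : ℕ → ℕ) (ρ : Finset (Finset ℕ)) : Finset (Finset ℕ) :=
  ρ.image (bmap S S' g)

def rmap (S S' : Finset ℕ) (g : ℕ → ℕ) (r : Finset ℕ → Finset ℕ → Prop) :
    Finset ℕ → Finset ℕ → Prop :=
  fun B B' => ∃ C C', r C C' ∧ B = bmap S S' g C ∧ B' = bmap S S' g C'

section shift

lemma bmap_root (S S' : Finset ℕ) (g : ℕ → ℕ) : bmap S S' g S = S' := if_pos rfl

lemma bmap_nonroot {S : Finset ℕ} (S' : Finset ℕ) (g : ℕ → ℕ) {B : Finset ℕ}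
    (hBS : B ≠ S) : bmap S S' g B = B.image g := if_neg hBS

variable {n n' : ℕ} {S S' : Finset ℕ} {g g' : ℕ → ℕ}
  (h : ShiftData n n' S S' g g')
  {ρ : Finset (Finset ℕ)} (hρ : MSPartition n S ρ)

include hρ in
lemma block_subset {B : Finset ℕ} (hB : B ∈ ρ) : B ⊆ Finset.range n := by
  have := Finset.le_sup (f := id) hB
  rw [hρ.1.2.2] at this
  exact this

include hρ in
lemma block_notmem {B : Finset ℕ} (hB : B ∈ ρ) (hBS : B ≠ S) :
    ∀ x ∈ B, x ∉ S := by
  intro x hx hxS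
  exact Finset.disjoint_left.1 (hρ.1.2.1 B hB S hρ.2.1 hBS) hx hxS

include h hρ in
lemma bmap_ne {B : Finset ℕ} (hB : B ∈ ρ) (hBS : B ≠ S) :
    bmap S S' g B ≠ S' := by
  rw [bmap_nonroot S' g hBS]
  intro heq
  obtain ⟨y, hy⟩ := h.hS'ne
  obtain ⟨x, hx, rfl⟩ := Finset.mem_image.1 (heq.symm ▸ hy)
  exact (h.hmem x (block_subset hρ hB hx) (block_notmem hρ hB hBS x hx)).2 hy

include h hρ in
lemma bmap_bmap {B : Finset ℕ} (hB : B ∈ ρ) :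
    bmap S' S g' (bmap S S' g B) = B := by
  by_cases hBS : B = S
  · subst hBS; rw [bmap_root, bmap_root]
  · rw [bmap_nonroot S' g hBS,
      bmap_nonroot S g' (by rw [← bmap_nonroot S' g hBS]; exact bmap_ne h hρ hB hBS)]
    rw [Finset.image_image]
    rw [show B.image (g' ∘ g) = B.image id from Finset.image_congr fun x hx =>
      h.hinv x (block_subset hρ hB hx) (block_notmem hρ hB hBS x hx)]
    exact Finset.image_id

include h hρ in
lemma bmap_injOn {B C : Finset ℕ} (hB : B ∈ ρ) (hC : C ∈ ρ)
    (he : bmap S S' g B = bmap S S' g C) : B = C := by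
  rw [← bmap_bmap h hρ hB, he, bmap_bmap h hρ hC]

include h hρ in
lemma bmap_eq_root {B : Finset ℕ} (hB : B ∈ ρ) (he : bmap S S' g B = S') : B = S := by
  exact bmap_injOn h hρ hB hρ.2.1 (he.trans (bmap_root S S' g).symm)

include h hρ in
lemma bmap_subset {B : Finset ℕ} (hB : B ∈ ρ) : bmap S S' g B ⊆ Finset.range n' := by
  by_cases hBS : B = S
  · subst hBS; rw [bmap_root]; exact h.hS'sub
  · rw [bmap_nonroot S' g hBS]
    intro y hy
    obtain ⟨x, hx, rfl⟩ := Finset.mem_image.1 hy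
    exact (h.hmem x (block_subset hρ hB hx) (block_notmem hρ hB hBS x hx)).1

include h in
lemma crosses_image {B B' : Finset ℕ} (hB : B ⊆ Finset.range n) (hB' : B' ⊆ Finset.range n)
    (hBS : ∀ x ∈ B, x ∉ S) (hB'S : ∀ x ∈ B', x ∉ S) :
    Crosses (B.image g) (B'.image g) ↔ Crosses B B' := by
  constructor
  · rintro ⟨i, hi, k, hk, j, hj, l, hl, hc⟩
    obtain ⟨i, hiB, rfl⟩ := Finset.mem_image.1 hi
    obtain ⟨k, hkB, rfl⟩ := Finset.mem_image.1 hk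
    obtain ⟨j, hjB, rfl⟩ := Finset.mem_image.1 hj
    obtain ⟨l, hlB, rfl⟩ := Finset.mem_image.1 hl
    have m := fun x y hx hy hx' hy' => (h.hmono x y hx hx' hy hy').mpr
    refine ⟨i, hiB, k, hkB, j, hjB, l, hlB, ?_⟩
    rcases hc with ⟨h1, h2, h3⟩ | ⟨h1, h2, h3⟩
    · exact Or.inl ⟨m _ _ (hB hiB) (hB' hjB) (hBS _ hiB) (hB'S _ hjB) h1,
        m _ _ (hB' hjB) (hB hkB) (hB'S _ hjB) (hBS _ hkB) h2,
        m _ _ (hB hkB) (hB' hlB) (hBS _ hkB) (hB'S _ hlB) h3⟩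
    · exact Or.inr ⟨m _ _ (hB' hjB) (hB hiB) (hB'S _ hjB) (hBS _ hiB) h1,
        m _ _ (hB hkB) (hB' hjB) (hBS _ hkB) (hB'S _ hjB) h2,
        m _ _ (hB' hlB) (hB hkB) (hB'S _ hlB) (hBS _ hkB) h3⟩
  · rintro ⟨i, hi, k, hk, j, hj, l, hl, hc⟩
    have m := fun x y hx hy hx' hy' => (h.hmono x y hx hx' hy hy').mp
    refine ⟨g i, Finset.mem_image_of_mem g hi, g k, Finset.mem_image_of_mem g hk,
      g j, Finset.mem_image_of_mem g hj, g l, Finset.mem_image_of_mem g hl, ?_⟩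
    rcases hc with ⟨h1, h2, h3⟩ | ⟨h1, h2, h3⟩
    · exact Or.inl ⟨m _ _ (hB hi) (hB' hj) (hBS _ hi) (hB'S _ hj) h1,
        m _ _ (hB' hj) (hB hk) (hB'S _ hj) (hBS _ hk) h2,
        m _ _ (hB hk) (hB' hl) (hBS _ hk) (hB'S _ hl) h3⟩
    · exact Or.inr ⟨m _ _ (hB' hj) (hB hi) (hB'S _ hj) (hBS _ hi) h1,
        m _ _ (hB hk) (hB' hj) (hBS _ hk) (hB'S _ hj) h2,
        m _ _ (hB' hl) (hB hk) (hB'S _ hl) (hBS _ hk) h3⟩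

include h hρ in
/-- Crossing transfers along `bmap` for blocks of `ρ`. -/
lemma crosses_bmap {B B' : Finset ℕ} (hB : B ∈ ρ) (hB' : B' ∈ ρ) :
    Crosses (bmap S S' g B) (bmap S S' g B') ↔ Crosses B B' := by
  by_cases hBS : B = S
  · subst hBS
    constructor
    · intro hc
      exact absurd hc (by rw [bmap_root]; exact h.hcrossS' _ (bmap_subset h hρ hB'))
    · intro hc; exact absurd hc (h.hcrossS _ (block_subset hρ hB'))
  · by_cases hB'S : B' = S
    · subst hB'S
      constructor
      · intro hc
        exact absurd (crosses_symm hc)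
          (by rw [bmap_root]; exact h.hcrossS' _ (bmap_subset h hρ hB))
      · intro hc; exact absurd (crosses_symm hc) (h.hcrossS _ (block_subset hρ hB))
    · rw [bmap_nonroot S' g hBS, bmap_nonroot S' g hB'S]
      exact crosses_image h (block_subset hρ hB) (block_subset hρ hB')
        (block_notmem hρ hB hBS) (block_notmem hρ hB' hB'S)

include h hρ in
lemma pmap_msp : MSPartition n' S' (pmap S S' g ρ) := by
  have hne := hρ.1.1
  have hdisj := hρ.1.2.1
  have hsup := hρ.1.2.2
  have hSρ := hρ.2.1
  have hcard := hρ.2.2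
  have hS'mem : S' ∈ pmap S S' g ρ :=
    Finset.mem_image.2 ⟨S, hSρ, bmap_root S S' g⟩
  refine ⟨⟨?_, ?_, ?_⟩, hS'mem, ?_⟩
  · intro C hC
    obtain ⟨B, hB, rfl⟩ := Finset.mem_image.1 hC
    by_cases hBS : B = S
    · rw [hBS, bmap_root]; exact h.hS'ne
    · rw [bmap_nonroot S' g hBS]; exact (hne B hB).image g
  · intro C hC C' hC' hCC'
    obtain ⟨B, hB, rfl⟩ := Finset.mem_image.1 hC
    obtain ⟨B', hB', rfl⟩ := Finset.mem_image.1 hC'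
    have hBB' : B ≠ B' := fun he => hCC' (by rw [he])
    rw [Finset.disjoint_left]
    intro y hy hy'
    by_cases hBS : B = S
    · rw [hBS, bmap_root] at hy
      have hB'S : B' ≠ S := fun he => hBB' (hBS.trans he.symm)
      rw [bmap_nonroot S' g hB'S] at hy'
      obtain ⟨x, hx, rfl⟩ := Finset.mem_image.1 hy'
      exact (h.hmem x (block_subset hρ hB' hx) (block_notmem hρ hB' hB'S x hx)).2 hy
    · by_cases hB'S : B' = S
      · rw [hB'S, bmap_root] at hy'
        rw [bmap_nonroot S' g hBS] at hy
        obtain ⟨x, hx, rfl⟩ := Finset.mem_image.1 hy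
        exact (h.hmem x (block_subset hρ hB hx) (block_notmem hρ hB hBS x hx)).2 hy'
      · rw [bmap_nonroot S' g hBS] at hy
        rw [bmap_nonroot S' g hB'S] at hy'
        obtain ⟨x, hx, rfl⟩ := Finset.mem_image.1 hy
        obtain ⟨x', hx', he⟩ := Finset.mem_image.1 hy'
        have : x' = x := by
          rw [← h.hinv x (block_subset hρ hB hx) (block_notmem hρ hB hBS x hx), ← he,
            h.hinv x' (block_subset hρ hB' hx') (block_notmem hρ hB' hB'S x' hx')]
        subst this
        exact Finset.disjoint_left.1 (hdisj B hB B' hB' hBB') hx hx'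
  · apply Finset.Subset.antisymm
    · intro y hy
      rw [Finset.mem_sup] at hy
      obtain ⟨C, hC, hyC⟩ := hy
      obtain ⟨B, hB, rfl⟩ := Finset.mem_image.1 hC
      exact bmap_subset h hρ hB hyC
    · intro y hy
      by_cases hyS' : y ∈ S'
      · exact Finset.mem_sup.2 ⟨S', hS'mem, hyS'⟩
      · obtain ⟨hy1, hy2⟩ := h.hmem' y hy hyS'
        have : g' y ∈ ρ.sup id := by rw [hsup]; exact hy1
        obtain ⟨B, hB, hyB⟩ := Finset.mem_sup.1 this
        have hBS : B ≠ S := fun he => hy2 (he ▸ hyB)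
        refine Finset.mem_sup.2 ⟨bmap S S' g B, Finset.mem_image_of_mem _ hB, ?_⟩
        rw [bmap_nonroot S' g hBS]
        have : g (g' y) = y := h.hinv' y hy hyS'
        exact this ▸ Finset.mem_image_of_mem g hyB
  · intro C hC hCS'
    obtain ⟨B, hB, rfl⟩ := Finset.mem_image.1 hC
    have hBS : B ≠ S := fun he => hCS' (by rw [he, bmap_root])
    rw [bmap_nonroot S' g hBS]
    rw [Finset.card_image_of_injOn, hcard B hB hBS]
    intro x hx x' hx' he
    rw [← h.hinv x (block_subset hρ hB hx) (block_notmem hρ hB hBS x hx), he,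
      h.hinv x' (block_subset hρ hB hx') (block_notmem hρ hB hBS x' hx')]

include h hρ in
lemma rmap_iff {r : Finset ℕ → Finset ℕ → Prop} (hor : IsOrientation ρ r)
    {C C' : Finset ℕ} (hC : C ∈ ρ) (hC' : C' ∈ ρ) :
    rmap S S' g r (bmap S S' g C) (bmap S S' g C') ↔ r C C' := by
  constructor
  · rintro ⟨D, D', hrD, hD, hD'⟩
    obtain ⟨hDρ, hD'ρ, -, -⟩ := hor.1 D D' hrD
    rw [bmap_injOn h hρ hC hDρ hD, bmap_injOn h hρ hC' hD'ρ hD']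
    exact hrD
  · intro hr
    exact ⟨C, C', hr, rfl, rfl⟩

include h hρ in
lemma pmap_rc {r : Finset ℕ → Finset ℕ → Prop} (hr : RootConnected ρ r S) :
    RootConnected (pmap S S' g ρ) (rmap S S' g r) S' := by
  obtain ⟨hor, hacy, hSρ, hsrc, huniq⟩ := hr
  have hS'mem : S' ∈ pmap S S' g ρ :=
    Finset.mem_image.2 ⟨S, hSρ, bmap_root S S' g⟩
  have hne_root : ∀ {C C'}, C ∈ ρ → C' ∈ ρ → Crosses C C' → C ≠ S ∧ C' ≠ S := by
    intro C C' hC hC' hc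
    constructor
    · rintro rfl; exact h.hcrossS _ (block_subset hρ hC') hc
    · rintro rfl; exact h.hcrossS _ (block_subset hρ hC) (crosses_symm hc)
  refine ⟨⟨?_, ?_⟩, ?_, hS'mem, ?_, ?_⟩
  · rintro B B' ⟨C, C', hrC, rfl, rfl⟩
    obtain ⟨hC, hC', hCC', hcross⟩ := hor.1 C C' hrC
    exact ⟨Finset.mem_image_of_mem _ hC, Finset.mem_image_of_mem _ hC',
      fun he => hCC' (bmap_injOn h hρ hC hC' he),
      (crosses_bmap h hρ hC hC').2 hcross⟩
  · intro B hB B' hB' hBB' hcross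
    obtain ⟨C, hC, rfl⟩ := Finset.mem_image.1 hB
    obtain ⟨C', hC', rfl⟩ := Finset.mem_image.1 hB'
    have hCC' : C ≠ C' := fun he => hBB' (by rw [he])
    have hcr : Crosses C C' := (crosses_bmap h hρ hC hC').1 hcross
    rw [rmap_iff h hρ hor hC hC', rmap_iff h hρ hor hC' hC]
    exact hor.2 C hC C' hC' hCC' hcr
  · -- acyclicity
    intro B hB
    have key : ∀ X Y, Relation.TransGen (rmap S S' g r) X Y →
        ∃ C ∈ ρ, ∃ C' ∈ ρ, X = bmap S S' g C ∧ Y = bmap S S' g C' ∧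
          Relation.TransGen r C C' := by
      intro X Y hXY
      induction hXY with
      | single hxy =>
        obtain ⟨C, C', hrC, rfl, rfl⟩ := hxy
        obtain ⟨hC, hC', -, -⟩ := hor.1 C C' hrC
        exact ⟨C, hC, C', hC', rfl, rfl, Relation.TransGen.single hrC⟩
      | tail _ hyz ih =>
        obtain ⟨C, hC, C', hC', rfl, rfl, htr⟩ := ih
        obtain ⟨D, D', hrD, hD, rfl⟩ := hyz
        obtain ⟨hDρ, hD'ρ, -, -⟩ := hor.1 D D' hrD
        have : C' = D := bmap_injOn h hρ hC' hDρ hD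
        subst this
        exact ⟨C, hC, D', hD'ρ, rfl, rfl, htr.tail hrD⟩
    obtain ⟨C, hC, C', hC', rfl, he, htr⟩ := key B B hB
    rw [bmap_injOn h hρ hC hC' he] at htr
    exact hacy C' htr
  · rintro B ⟨C, C', hrC, rfl, heq⟩
    obtain ⟨hC, hC', -, -⟩ := hor.1 C C' hrC
    have : C' = S := bmap_eq_root h hρ hC' heq.symm
    subst this
    exact hsrc C hrC
  · intro B hB hnoin
    obtain ⟨C, hC, rfl⟩ := Finset.mem_image.1 hB
    by_cases hCS : C = S
    · rw [hCS, bmap_root]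
    · exfalso
      have : ¬ ∀ D, ¬ r D C := fun hall => hCS (huniq C hC hall)
      push_neg at this
      obtain ⟨D, hrD⟩ := this
      exact hnoin (bmap S S' g D) ⟨D, C, hrD, rfl, rfl⟩

end shift

lemma countA_eq_of_shift {n n' : ℕ} {S S' : Finset ℕ} {g g' : ℕ → ℕ}
    (h : ShiftData n n' S S' g g') : countA n S = countA n' S' := by
  have h' := h.symm
  apply Nat.card_congr
  refine
    { toFun := fun p => ⟨(pmap S S' g p.1.1, rmap S S' g p.1.2),
        pmap_msp h p.2.1, pmap_rc h p.2.1 p.2.2⟩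
      invFun := fun q => ⟨(pmap S' S g' q.1.1, rmap S' S g' q.1.2),
        pmap_msp h' q.2.1, pmap_rc h' q.2.1 q.2.2⟩
      left_inv := ?_
      right_inv := ?_ }
  · rintro ⟨⟨ρ, r⟩, hρ, hr⟩
    have hρ' := pmap_msp h hρ
    apply Subtype.ext
    dsimp only
    have e1 : pmap S' S g' (pmap S S' g ρ) = ρ := by
      rw [pmap, pmap, Finset.image_image]
      rw [show ρ.image (bmap S' S g' ∘ bmap S S' g) = ρ.image id from
        Finset.image_congr fun B hB => bmap_bmap h hρ hB]
      exact Finset.image_id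
    have e2 : rmap S' S g' (rmap S S' g r) = r := by
      funext B B'
      apply propext
      constructor
      · rintro ⟨C, C', ⟨D, D', hrD, rfl, rfl⟩, rfl, rfl⟩
        obtain ⟨hD, hD', -, -⟩ := hr.1.1 D D' hrD
        rw [bmap_bmap h hρ hD, bmap_bmap h hρ hD']
        exact hrD
      · intro hrB
        obtain ⟨hB, hB', -, -⟩ := hr.1.1 B B' hrB
        exact ⟨bmap S S' g B, bmap S S' g B', ⟨B, B', hrB, rfl, rfl⟩,
          (bmap_bmap h hρ hB).symm, (bmap_bmap h hρ hB').symm⟩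
    rw [Prod.ext_iff]
    exact ⟨e1, e2⟩
  · rintro ⟨⟨ρ, r⟩, hρ, hr⟩
    apply Subtype.ext
    dsimp only
    have e1 : pmap S S' g (pmap S' S g' ρ) = ρ := by
      rw [pmap, pmap, Finset.image_image]
      rw [show ρ.image (bmap S S' g ∘ bmap S' S g') = ρ.image id from
        Finset.image_congr fun B hB => bmap_bmap h' hρ hB]
      exact Finset.image_id
    have e2 : rmap S S' g (rmap S' S g' r) = r := by
      funext B B'
      apply propext
      constructor
      · rintro ⟨C, C', ⟨D, D', hrD, rfl, rfl⟩, rfl, rfl⟩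
        obtain ⟨hD, hD', -, -⟩ := hr.1.1 D D' hrD
        rw [bmap_bmap h' hρ hD, bmap_bmap h' hρ hD']
        exact hrD
      · intro hrB
        obtain ⟨hB, hB', -, -⟩ := hr.1.1 B B' hrB
        exact ⟨bmap S' S g' B, bmap S' S g' B', ⟨B, B', hrB, rfl, rfl⟩,
          (bmap_bmap h' hρ hB).symm, (bmap_bmap h' hρ hB').symm⟩
    rw [Prod.ext_iff]
    exact ⟨e1, e2⟩

/-! ### Instantiations -/

lemma no_cross_01 (k : ℕ) : ∀ B, B ⊆ Finset.range (2 * k + 2) → ¬ Crosses {0, 1} B := by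
  rintro B - ⟨i, hi, j, hj, c, hc, l, hl, hp⟩
  simp only [Finset.mem_insert, Finset.mem_singleton] at hi hj
  omega

lemma no_cross_0 (k : ℕ) : ∀ B, B ⊆ Finset.range (2 * k + 1) → ¬ Crosses {0} B := by
  rintro B - ⟨i, hi, j, hj, c, hc, l, hl, hp⟩
  simp only [Finset.mem_singleton] at hi hj
  omega

lemma no_cross_ends (k : ℕ) :
    ∀ B, B ⊆ Finset.range (2 * k + 2) → ¬ Crosses {0, 2 * k + 1} B := by
  rintro B hB ⟨i, hi, j, hj, c, hc, l, hl, hp⟩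
  simp only [Finset.mem_insert, Finset.mem_singleton] at hi hj
  have h1 := Finset.mem_range.1 (hB hc)
  have h2 := Finset.mem_range.1 (hB hl)
  omega

lemma shiftA (k : ℕ) :
    ShiftData (2 * k + 2) (2 * k + 2) {0, 1} {0, 2 * k + 1} (· - 1) (· + 1) := by
  refine ⟨⟨0, by simp⟩, ?_, ⟨0, by simp⟩, ?_, ?_, ?_, ?_, ?_, no_cross_01 k,
    no_cross_ends k, ?_⟩ <;>
    simp only [Finset.subset_iff, Finset.mem_insert, Finset.mem_singleton,
      Finset.mem_range] <;> intros <;> omega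

lemma shiftB (k : ℕ) :
    ShiftData (2 * k + 2) (2 * k + 1) {0, 1} {0} (· - 1) (· + 1) := by
  refine ⟨⟨0, by simp⟩, ?_, ⟨0, by simp⟩, ?_, ?_, ?_, ?_, ?_, no_cross_01 k,
    no_cross_0 k, ?_⟩ <;>
    simp only [Finset.subset_iff, Finset.mem_insert, Finset.mem_singleton,
      Finset.mem_range] <;> intros <;> omega

/-- Boundary values of the refinement: `A_{k+1}(1) = A_{k+1}(2k+1)`, and by
merging the consecutive pair `0, 1` of the root, this equals the count for the
singleton root `{0}` on the ground set `{0,...,2k}`. -/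
theorem refined_lassalle_boundary (k : ℕ) :
    countA (2 * k + 2) {0, 1} = countA (2 * k + 2) {0, 2 * k + 1} ∧
    countA (2 * k + 2) {0, 1} = countA (2 * k + 1) {0} := by
  exact ⟨countA_eq_of_shift (shiftA k), countA_eq_of_shift (shiftB k)⟩
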